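/- For the metric Ĝ with blocks G = R_{1+λλᵀ}, B = L_a R_{λᵀ}, D = L_{aᵀa} (a of rank r), the inverse metric is given blockwise by Ĝ^{-1} = [[1 - L_{P_a} R_{λλᵀ(1+λλᵀ)^{-1}}, -L_{a(aᵀa)^{-1}} R_{λᵀ}],[R_λ L_{(aᵀa)^{-1} aᵀ}, L_{(aᵀa)^{-1}} R_{1+λᵀλ}]], where P_a = 1 - a(aᵀa)^{-1}aᵀ is the orthogonal projection onto the kernel of aᵀ. -/
import Mathlib


open Matrix

lemma my_isUnit_of_rank {r : ℕ} (M : Matrix (Fin r) (Fin r) ℝ) (h : M.rank = r) : IsUnit M := by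
  rw [← Matrix.mulVec_surjective_iff_isUnit]
  have htop : LinearMap.range M.mulVecLin = ⊤ := by
    apply Submodule.eq_top_of_finrank_eq
    rw [← Matrix.rank, h]
    simp [Module.finrank_pi]
  intro v
  simpa using LinearMap.range_eq_top.mp htop v

lemma my_rank_ata {p r : ℕ} (a : Matrix (Fin p) (Fin r) ℝ) (ha : a.rank = r) :
    IsUnit (aᵀ * a) :=
  my_isUnit_of_rank _ (by rw [Matrix.rank_transpose_mul_self, ha])

lemma my_S_unit {r s : ℕ} (lam : Matrix (Fin r) (Fin s) ℝ) :
    IsUnit (1 + lam * lamᵀ) := by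
  have h : (1 + lam * lamᵀ).PosDef := by
    have := Matrix.posSemidef_self_mul_conjTranspose lam
    rw [show lamᴴ = lamᵀ from rfl] at this
    exact Matrix.PosDef.add_posSemidef Matrix.PosDef.one this
  exact h.isUnit

/-- For the metric operator `Ĝ(c,μ) = (c(1+λλᵀ) + aμλᵀ, aᵀcλ + aᵀaμ)` (blocks
`G = R_{1+λλᵀ}`, `B = L_a R_{λᵀ}`, `D = L_{aᵀa}`), the inverse metric is given blockwise by
`Ĝ⁻¹ = [[1 - L_{P_a} R_{λλᵀ(1+λλᵀ)⁻¹}, -L_{a(aᵀa)⁻¹} R_{λᵀ}], [-R_λ L_{(aᵀa)⁻¹aᵀ}, L_{(aᵀa)⁻¹} R_{1+λᵀλ}]]`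
(the bottom-left block being `-ρBᵀG⁻¹` as in the general block-inverse formula), with
`P_a = 1 - a(aᵀa)⁻¹aᵀ` the orthogonal projection onto the kernel of `aᵀ`:
one verifies `Ĝ⁻¹ ⬝ Ĝ = 1` componentwise. -/
theorem stmt11 (p q r : ℕ) (hr : r ≤ q)
    (a : Matrix (Fin p) (Fin r) ℝ) (ha : a.rank = r)
    (lam : Matrix (Fin r) (Fin (q - r)) ℝ)
    (c : Matrix (Fin p) (Fin r) ℝ) (μ : Matrix (Fin r) (Fin (q - r)) ℝ) :
    (c * (1 + lam * lamᵀ) + a * μ * lamᵀ) -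
        (1 - a * (aᵀ * a)⁻¹ * aᵀ) * (c * (1 + lam * lamᵀ) + a * μ * lamᵀ) *
          (lam * lamᵀ * (1 + lam * lamᵀ)⁻¹) -
        a * (aᵀ * a)⁻¹ * (aᵀ * c * lam + aᵀ * a * μ) * lamᵀ = c ∧
    -((aᵀ * a)⁻¹ * aᵀ * (c * (1 + lam * lamᵀ) + a * μ * lamᵀ) * lam) +
        (aᵀ * a)⁻¹ * (aᵀ * c * lam + aᵀ * a * μ) * (1 + lamᵀ * lam) = μ := by
  have hAdet : IsUnit (aᵀ * a).det := (Matrix.isUnit_iff_isUnit_det _).mp (my_rank_ata a ha)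
  have hSdet : IsUnit (1 + lam * lamᵀ).det :=
    (Matrix.isUnit_iff_isUnit_det _).mp (my_S_unit lam)
  have h2 : (aᵀ * a)⁻¹ * (aᵀ * a) = 1 := Matrix.nonsing_inv_mul _ hAdet
  have hSS : (1 + lam * lamᵀ) * (1 + lam * lamᵀ)⁻¹ = 1 := Matrix.mul_nonsing_inv _ hSdet
  have hN2 : ∀ {k : ℕ} (X : Matrix (Fin r) (Fin k) ℝ),
      (aᵀ * a)⁻¹ * (aᵀ * (a * X)) = X := by
    intro k X
    calc (aᵀ * a)⁻¹ * (aᵀ * (a * X)) = ((aᵀ * a)⁻¹ * (aᵀ * a)) * X := by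
          simp only [Matrix.mul_assoc]
      _ = X := by rw [h2, Matrix.one_mul]
  have hK : (1 + lam * lamᵀ) * (lam * lamᵀ * (1 + lam * lamᵀ)⁻¹) = lam * lamᵀ := by
    have comm : (1 + lam * lamᵀ) * (lam * lamᵀ) = (lam * lamᵀ) * (1 + lam * lamᵀ) := by
      noncomm_ring
    calc (1 + lam * lamᵀ) * (lam * lamᵀ * (1 + lam * lamᵀ)⁻¹)
        = ((1 + lam * lamᵀ) * (lam * lamᵀ)) * (1 + lam * lamᵀ)⁻¹ := (Matrix.mul_assoc _ _ _).symm
      _ = (lam * lamᵀ) * ((1 + lam * lamᵀ) * (1 + lam * lamᵀ)⁻¹) := by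
          rw [comm, Matrix.mul_assoc]
      _ = lam * lamᵀ := by rw [hSS, Matrix.mul_one]
  constructor
  · have hPG : (1 - a * (aᵀ * a)⁻¹ * aᵀ) * (c * (1 + lam * lamᵀ) + a * μ * lamᵀ) *
        (lam * lamᵀ * (1 + lam * lamᵀ)⁻¹)
        = (1 - a * (aᵀ * a)⁻¹ * aᵀ) * (c * (lam * lamᵀ)) := by
      have hz : (1 - a * (aᵀ * a)⁻¹ * aᵀ) * (a * μ * lamᵀ) = 0 := by
        have hPa : (1 - a * (aᵀ * a)⁻¹ * aᵀ) * a = 0 := by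
          rw [Matrix.sub_mul, Matrix.one_mul, Matrix.mul_assoc (a * (aᵀ * a)⁻¹) aᵀ a,
            Matrix.mul_assoc a (aᵀ * a)⁻¹ (aᵀ * a), h2, Matrix.mul_one, sub_self]
        calc (1 - a * (aᵀ * a)⁻¹ * aᵀ) * (a * μ * lamᵀ)
            = ((1 - a * (aᵀ * a)⁻¹ * aᵀ) * a) * (μ * lamᵀ) := by simp only [Matrix.mul_assoc]
          _ = 0 := by rw [hPa, Matrix.zero_mul]
      have h0 : (1 - a * (aᵀ * a)⁻¹ * aᵀ) * (c * (1 + lam * lamᵀ) + a * μ * lamᵀ)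
          = (1 - a * (aᵀ * a)⁻¹ * aᵀ) * c * (1 + lam * lamᵀ) := by
        rw [Matrix.mul_add, hz, add_zero]; simp only [Matrix.mul_assoc]
      rw [h0, Matrix.mul_assoc, hK, Matrix.mul_assoc]
    rw [hPG]
    simp only [Matrix.mul_add, Matrix.add_mul, Matrix.sub_mul, Matrix.mul_sub, Matrix.mul_one,
      Matrix.one_mul, Matrix.mul_assoc, hN2]
    abel
  · simp only [Matrix.mul_add, Matrix.add_mul, Matrix.sub_mul, Matrix.mul_sub, Matrix.mul_one,
      Matrix.one_mul, Matrix.mul_assoc, hN2]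
    abel
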